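/- Let L be a finite uniquely atomistic lattice and let x, y ∈ L be distinct elements, with x = sup S₁ and y = sup S₂ their unique decompositions as joins of sets of atoms S₁ and S₂. Then the meet x ⊓ y equals sup (S₁ ∩ S₂), i.e., the unique set of atoms whose join is x ⊓ y is S₁ ∩ S₂. -/
import Mathlib

/-- An atom below an element belongs to its (unique) atomic decomposition. -/
theorem atom_mem_of_le_sup
    {α : Type*} [Lattice α] [OrderBot α] [DecidableEq α]
    (hua : ∀ x : α, ∃! S : Finset α, (∀ a ∈ S, IsAtom a) ∧ x = S.sup id)
    {S : Finset α} (hS : ∀ a ∈ S, IsAtom a) {a : α} (ha : IsAtom a)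
    (hle : a ≤ S.sup id) : a ∈ S := by
  obtain ⟨T, _, huniq⟩ := hua (S.sup id)
  have h1 : S = T := huniq S ⟨hS, rfl⟩
  have h2 : insert a S = T := by
    refine huniq _ ⟨?_, ?_⟩
    · intro b hb
      rcases Finset.mem_insert.mp hb with h | h
      · exact h ▸ ha
      · exact hS b h
    · rw [Finset.sup_insert, id]
      exact (sup_eq_right.mpr hle).symm
  have : a ∈ insert a S := Finset.mem_insert_self a S
  rw [h2, ← h1] at this
  exact this

/-- In a finite uniquely atomistic lattice, if `x = sup S₁` and `y = sup S₂`
are the unique decompositions of distinct elements `x ≠ y` as joins of sets of atoms,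
then `x ⊓ y = sup (S₁ ∩ S₂)`. -/
theorem meet_eq_sup_inter_of_uniquelyAtomistic
    {α : Type*} [Lattice α] [OrderBot α] [Fintype α] [DecidableEq α]
    (hua : ∀ x : α, ∃! S : Finset α, (∀ a ∈ S, IsAtom a) ∧ x = S.sup id)
    (x y : α) (hxy : x ≠ y) (S₁ S₂ : Finset α)
    (hS₁atoms : ∀ a ∈ S₁, IsAtom a) (hxS₁ : x = S₁.sup id)
    (hS₂atoms : ∀ a ∈ S₂, IsAtom a) (hyS₂ : y = S₂.sup id) :
    x ⊓ y = (S₁ ∩ S₂).sup id := by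
  apply le_antisymm
  · obtain ⟨T, ⟨hT, hzT⟩, _⟩ := hua (x ⊓ y)
    rw [hzT]
    apply Finset.sup_le
    intro a haT
    have hax : a ∈ S₁ := by
      apply atom_mem_of_le_sup hua hS₁atoms (hT a haT)
      calc (a : α) ≤ T.sup id := Finset.le_sup (f := id) haT
        _ = x ⊓ y := hzT.symm
        _ ≤ x := inf_le_left
        _ = S₁.sup id := hxS₁
    have hay : a ∈ S₂ := by
      apply atom_mem_of_le_sup hua hS₂atoms (hT a haT)
      calc (a : α) ≤ T.sup id := Finset.le_sup (f := id) haT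
        _ = x ⊓ y := hzT.symm
        _ ≤ y := inf_le_right
        _ = S₂.sup id := hyS₂
    exact Finset.le_sup (f := id) (Finset.mem_inter.mpr ⟨hax, hay⟩)
  · apply le_inf
    · rw [hxS₁]; exact Finset.sup_mono Finset.inter_subset_left
    · rw [hyS₂]; exact Finset.sup_mono Finset.inter_subset_right
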